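/- Let λ ∈ (0,1) and set γ* = (1 − √(1−λ))²/λ. Then: (a) for every t ∈ [0, λ], every complex root μ of μ² − (1+γ*)·t·μ + γ*·t satisfies |μ| ≤ 1 − √(1−λ), and for t = λ the quadratic has the double root 1 − √(1−λ); and (b) for every γ ≥ 0, the quadratic μ² − (1+γ)·λ·μ + γ·λ has a complex root μ with |μ| ≥ 1 − √(1−λ). In other words, γ* minimizes over γ ≥ 0 the worst-case root modulus, with optimal value ν* = 1 − √(1−λ). -/

import Mathlib

open Filter Topology

private lemma quadRootBound12 {b c ν : ℝ} (hdisc : b ^ 2 ≤ 4 * c) (hcν : c ≤ ν ^ 2)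
    (hν0 : 0 ≤ ν) (μ : ℂ) (hμ : μ ^ 2 - (b : ℂ) * μ + (c : ℂ) = 0) :
    ‖μ‖ ≤ ν := by
  rw [Complex.ext_iff] at hμ
  obtain ⟨h1, h2⟩ := hμ
  simp [pow_two, Complex.mul_re, Complex.mul_im] at h1 h2
  obtain ⟨x, hx⟩ : ∃ x : ℝ, x = μ.re := ⟨_, rfl⟩
  obtain ⟨y, hy'⟩ : ∃ y : ℝ, y = μ.im := ⟨_, rfl⟩
  rw [← hx, ← hy'] at h1 h2
  have hre : x ^ 2 - y ^ 2 - b * x + c = 0 := by nlinarith [h1]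
  have him : y * (2 * x - b) = 0 := by nlinarith [h2]
  have key : x ^ 2 + y ^ 2 ≤ c := by
    rcases mul_eq_zero.mp him with hy | hxb
    · have hy2 : y ^ 2 = 0 := by rw [hy]; ring
      have hE : (2 * x - b) ^ 2 = b ^ 2 - 4 * c := by
        linear_combination 4 * hre + 4 * hy2
      have hE0 : 2 * x - b = 0 := by
        have h' : (2 * x - b) ^ 2 ≤ 0 := by rw [hE]; linarith
        nlinarith [sq_nonneg (2 * x - b)]
      nlinarith [hE0, hy2, hre, hdisc]
    · have hb2x : b = 2 * x := by linarith
      subst hb2x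
      nlinarith [hre, hdisc]
  have habs : (‖μ‖) ^ 2 = x ^ 2 + y ^ 2 := by
    rw [Complex.sq_norm, Complex.normSq_apply, hx, hy']; ring
  nlinarith [norm_nonneg μ]

private lemma quadRootExists12 {b c ν : ℝ} (hb0 : 0 ≤ b) (hc0 : 0 ≤ c) (hν0 : 0 ≤ ν)
    (h : ν ^ 2 - b * ν + c ≤ 0 ∨ ν ^ 2 ≤ c) :
    ∃ μ : ℂ, μ ^ 2 - (b : ℂ) * μ + (c : ℂ) = 0 ∧ ν ≤ ‖μ‖ := by
  rcases le_or_gt (4 * c) (b ^ 2) with hD | hD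
  · -- real root
    obtain ⟨e, he0, he2⟩ : ∃ e : ℝ, 0 ≤ e ∧ e ^ 2 = b ^ 2 - 4 * c :=
      ⟨Real.sqrt (b ^ 2 - 4 * c), Real.sqrt_nonneg _, Real.sq_sqrt (by linarith)⟩
    refine ⟨(((b + e) / 2 : ℝ) : ℂ), ?_, ?_⟩
    · have hreal : ((b + e) / 2) ^ 2 - b * ((b + e) / 2) + c = 0 := by
        linear_combination (1 / 4 : ℝ) * he2
      exact_mod_cast congrArg (Complex.ofReal) hreal
    · have hr0 : 0 ≤ (b + e) / 2 := by linarith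
      rw [Complex.norm_real, Real.norm_eq_abs, abs_of_nonneg hr0]
      rcases h with hq | hq
      · nlinarith [he0, hq, he2, sq_nonneg (e + b - 2 * ν)]
      · nlinarith [he0, hq, he2, sq_nonneg (b - 2 * ν)]
  · -- complex roots
    have hq : ν ^ 2 ≤ c := by
      rcases h with hq | hq
      · nlinarith [sq_nonneg (2 * ν - b)]
      · exact hq
    obtain ⟨e, he0, he2⟩ : ∃ e : ℝ, 0 ≤ e ∧ e ^ 2 = 4 * c - b ^ 2 :=
      ⟨Real.sqrt (4 * c - b ^ 2), Real.sqrt_nonneg _, Real.sq_sqrt (by linarith)⟩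
    refine ⟨((b / 2 : ℝ) : ℂ) + ((e / 2 : ℝ) : ℂ) * Complex.I, ?_, ?_⟩
    · rw [Complex.ext_iff]
      constructor <;>
        simp [pow_two, Complex.mul_re, Complex.mul_im, Complex.add_re, Complex.add_im] <;>
        nlinarith [he2]
    · have habs : (‖((b / 2 : ℝ) : ℂ) + ((e / 2 : ℝ) : ℂ) * Complex.I‖) ^ 2
          = (b / 2) ^ 2 + (e / 2) ^ 2 := by
        rw [Complex.sq_norm, Complex.normSq_apply]
        simp [Complex.add_re, Complex.add_im, Complex.mul_re, Complex.mul_im]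
        ring
      nlinarith [norm_nonneg (((b / 2 : ℝ) : ℂ) + ((e / 2 : ℝ) : ℂ) * Complex.I), habs]

/-- Optimal inertia for eigenvalues in `[0, λ]`, `λ ∈ (0,1)`. -/
theorem stmt_12 {lam : ℝ} (hlam : lam ∈ Set.Ioo (0 : ℝ) 1)
    (γs : ℝ) (hγs : γs = (1 - Real.sqrt (1 - lam)) ^ 2 / lam) :
    (∀ t ∈ Set.Icc (0 : ℝ) lam,
        ∀ μ : ℂ, μ ^ 2 - (1 + (γs : ℂ)) * (t : ℂ) * μ + (γs : ℂ) * (t : ℂ) = 0 →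
          ‖μ‖ ≤ 1 - Real.sqrt (1 - lam)) ∧
    (∀ μ : ℂ, μ ^ 2 - (1 + (γs : ℂ)) * (lam : ℂ) * μ + (γs : ℂ) * (lam : ℂ)
        = (μ - ((1 - Real.sqrt (1 - lam) : ℝ) : ℂ)) ^ 2) ∧
    (∀ γ : ℝ, 0 ≤ γ →
        ∃ μ : ℂ, μ ^ 2 - (1 + (γ : ℂ)) * (lam : ℂ) * μ + (γ : ℂ) * (lam : ℂ) = 0 ∧
          1 - Real.sqrt (1 - lam) ≤ ‖μ‖) := by
  obtain ⟨hl0, hl1⟩ := hlam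
  obtain ⟨s, hs⟩ : ∃ s : ℝ, s = Real.sqrt (1 - lam) := ⟨_, rfl⟩
  rw [← hs]
  have hs2 : s ^ 2 = 1 - lam := by rw [hs]; exact Real.sq_sqrt (by linarith)
  have hs0 : 0 < s := by rw [hs]; exact Real.sqrt_pos.mpr (by linarith)
  have hs1 : s < 1 := by nlinarith
  obtain ⟨ν, hν⟩ : ∃ ν : ℝ, ν = 1 - s := ⟨_, rfl⟩
  rw [← hν]
  rw [← hs, ← hν] at hγs
  have hν0 : 0 < ν := by rw [hν]; linarith
  have hν1 : ν < 1 := by rw [hν]; linarith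
  have h2ν : lam + ν ^ 2 = 2 * ν := by rw [hν]; linear_combination hs2
  have hc : γs * lam = ν ^ 2 := by rw [hγs]; field_simp
  have hb : (1 + γs) * lam = 2 * ν := by
    rw [hγs]; field_simp; linear_combination (ν - 1 - s) * hν + hs2
  have hγs0 : 0 ≤ γs := by rw [hγs]; positivity
  have hdl : (1 + γs) ^ 2 * lam = 4 * γs := by
    have h : ((1 + γs) ^ 2 * lam) * lam = (4 * γs) * lam := by
      linear_combination ((1 + γs) * lam + 2 * ν) * hb - 4 * hc
    exact mul_right_cancel₀ (ne_of_gt hl0) h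
  refine ⟨?_, ?_, ?_⟩
  · -- part (a)
    intro t ht μ hμ
    obtain ⟨ht0, htl⟩ := ht
    have hμ' : μ ^ 2 - (((1 + γs) * t : ℝ) : ℂ) * μ + ((γs * t : ℝ) : ℂ) = 0 := by
      push_cast
      linear_combination hμ
    have hdisc : ((1 + γs) * t) ^ 2 ≤ 4 * (γs * t) := by
      have h4 : 4 * (γs * t) = (1 + γs) ^ 2 * lam * t := by linear_combination t * hdl.symm
      nlinarith [mul_nonneg (mul_nonneg (sq_nonneg (1 + γs)) ht0) (sub_nonneg.mpr htl)]
    have hcν : γs * t ≤ ν ^ 2 := by nlinarith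
    exact quadRootBound12 hdisc hcν hν0.le μ hμ'
  · -- part (a), t = λ double root
    intro μ
    have hbC : ((1 : ℂ) + γs) * lam = 2 * ν := by exact_mod_cast congrArg (Complex.ofReal) hb
    have hcC : (γs : ℂ) * lam = (ν : ℂ) ^ 2 := by exact_mod_cast congrArg (Complex.ofReal) hc
    push_cast at hbC hcC ⊢
    linear_combination (-μ) * hbC + hcC
  · -- part (b)
    intro γ hγ0
    obtain ⟨b, hbdef⟩ : ∃ b : ℝ, b = (1 + γ) * lam := ⟨_, rfl⟩
    obtain ⟨c, hcdef⟩ : ∃ c : ℝ, c = γ * lam := ⟨_, rfl⟩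
    have hbC : (1 + (γ : ℂ)) * (lam : ℂ) = ((b : ℝ) : ℂ) := by rw [hbdef]; push_cast; ring
    have hcC : ((γ : ℂ)) * (lam : ℂ) = ((c : ℝ) : ℂ) := by rw [hcdef]; push_cast; ring
    rw [hbC, hcC]
    have hb0 : 0 ≤ b := by rw [hbdef]; positivity
    have hc0 : 0 ≤ c := by rw [hcdef]; positivity
    have hbc : b = lam + c := by rw [hbdef, hcdef]; ring
    refine quadRootExists12 hb0 hc0 hν0.le ?_
    rcases le_or_gt (ν ^ 2 - b * ν + c) 0 with hq | hq
    · exact Or.inl hq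
    · refine Or.inr ?_
      -- q(ν) > 0 forces c > ν²
      nlinarith [hq, hs0, hν0, hs2, h2ν, hν]
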